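/- There exist positive integers A and B with gcd(A,B)=1 such that for every positive integer n and every nonnegative integer k, the number A·n + B + 9·10^k is composite. -/
import Mathlib

lemma pow_cycle (p per : ℕ) [NeZero p] (h : (10:ZMod p)^per = 1) (k : ℕ) :
    (10:ZMod p)^k = 10^(k % per) := by
  conv_lhs => rw [← Nat.div_add_mod k per]
  rw [pow_add, pow_mul, h, one_pow, one_mul]

lemma key (k : ℕ) : ∃ p, Nat.Prime p ∧ p ∣ 11111111 ∧ p ∣ 7923764 + 9*10^k ∧ p ≤ 137 := by
  have h2 : k % 2 = k % 8 % 2 := (Nat.mod_mod_of_dvd k (by norm_num)).symm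
  have h4 : k % 4 = k % 8 % 4 := (Nat.mod_mod_of_dvd k (by norm_num)).symm
  have h8 : k % 8 = k % 8 % 8 := (Nat.mod_mod_of_dvd k (by norm_num)).symm
  have hlt : k % 8 < 8 := Nat.mod_lt k (by norm_num)
  have d11 : k % 2 = 0 → (11:ℕ) ∣ 7923764 + 9*10^k := by
    intro h
    rw [← ZMod.natCast_eq_zero_iff]
    push_cast
    rw [pow_cycle 11 2 (by decide), h]
    decide
  have d101 : k % 4 = 1 → (101:ℕ) ∣ 7923764 + 9*10^k := by
    intro h
    rw [← ZMod.natCast_eq_zero_iff]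
    push_cast
    rw [pow_cycle 101 4 (by decide), h]
    decide
  have d73 : k % 8 = 3 → (73:ℕ) ∣ 7923764 + 9*10^k := by
    intro h
    rw [← ZMod.natCast_eq_zero_iff]
    push_cast
    rw [pow_cycle 73 8 (by decide), h]
    decide
  have d137 : k % 8 = 7 → (137:ℕ) ∣ 7923764 + 9*10^k := by
    intro h
    rw [← ZMod.natCast_eq_zero_iff]
    push_cast
    rw [pow_cycle 137 8 (by decide), h]
    decide
  interval_cases h : k % 8
  · exact ⟨11, by norm_num, by norm_num, d11 (by omega), by norm_num⟩
  · exact ⟨101, by norm_num, by norm_num, d101 (by omega), by norm_num⟩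
  · exact ⟨11, by norm_num, by norm_num, d11 (by omega), by norm_num⟩
  · exact ⟨73, by norm_num, by norm_num, d73 (by omega), by norm_num⟩
  · exact ⟨11, by norm_num, by norm_num, d11 (by omega), by norm_num⟩
  · exact ⟨101, by norm_num, by norm_num, d101 (by omega), by norm_num⟩
  · exact ⟨11, by norm_num, by norm_num, d11 (by omega), by norm_num⟩
  · exact ⟨137, by norm_num, by norm_num, d137 (by omega), by norm_num⟩

theorem stmt_6 : ∃ A B : ℕ, 0 < A ∧ 0 < B ∧ Nat.gcd A B = 1 ∧
    ∀ n : ℕ, 1 ≤ n → ∀ k : ℕ,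
      1 < A * n + B + 9 * 10 ^ k ∧ ¬ Nat.Prime (A * n + B + 9 * 10 ^ k) := by
  refine ⟨11111111, 7923764, by norm_num, by norm_num, by norm_num, fun n hn k => ?_⟩
  obtain ⟨p, hp, hA, hB, hle⟩ := key k
  have hbig : 137 < 11111111 * n + 7923764 + 9 * 10 ^ k := by
    have h1 : 1 ≤ 10 ^ k := Nat.one_le_pow _ _ (by norm_num)
    omega
  refine ⟨by omega, fun hprime => ?_⟩
  have hdvd : p ∣ 11111111 * n + 7923764 + 9 * 10 ^ k := by
    have : 7923764 + 9 * 10 ^ k + 11111111 * n = 11111111 * n + 7923764 + 9 * 10 ^ k := by ring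
    exact this ▸ Nat.dvd_add hB (hA.mul_right n)
  rcases (hprime.eq_one_or_self_of_dvd p hdvd) with h | h
  · exact hp.one_lt.ne' h
  · omega
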